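/- Assume the nondegeneracy condition for the QVE Mx = a + b(x,x). Fix splittings b = b₁ + b₂, where b₁, b₂ are bilinear and map pairs of nonnegative vectors to nonnegative vectors, and M = N − P, where N is an M-matrix and P ≥ 0. Set J(x) := N − b₁(·,x) (the matrix of w ↦ Nw − b₁(w,x)) and g(x) := a + Px + b₂(x,x). Let x₀ satisfy 0 ≤ x₀ ≤ x* and F(x₀) ≤ 0 (for instance x₀ = 0), and define x_{k+1} = J(x_k)⁻¹ g(x_k). Then: (1) J(x_k) is nonsingular for all k, so the iteration is well defined; (2) x_k ≤ x_{k+1} ≤ x* for all k and x_k → x* as k → ∞; (3) F(x_k) ≤ 0 for all k. -/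

import Mathlib

open Matrix Filter Topology

/-- The spectral radius of a real square matrix: the supremum of the norms of
its complex eigenvalues. -/
noncomputable def specRad {n : ℕ} (A : Matrix (Fin n) (Fin n) ℝ) : ℝ :=
  sSup {r : ℝ | ∃ μ ∈ spectrum ℂ (A.map (Complex.ofReal)), ‖μ‖ = r}

/-- An M-matrix: a matrix of the form `s • 1 - P` with `P ≥ 0` and `ρ(P) ≤ s`. -/
def IsMMat {n : ℕ} (A : Matrix (Fin n) (Fin n) ℝ) : Prop :=
  ∃ (s : ℝ) (P : Matrix (Fin n) (Fin n) ℝ),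
    (∀ i j, 0 ≤ P i j) ∧ specRad P ≤ s ∧ A = s • (1 : Matrix (Fin n) (Fin n) ℝ) - P

/-- A nonsingular M-matrix: an M-matrix that is invertible. -/
def IsNsMMat {n : ℕ} (A : Matrix (Fin n) (Fin n) ℝ) : Prop :=
  IsMMat A ∧ IsUnit A.det

namespace QVEAux

variable {n : ℕ}


/-- canonical basis vector -/
def e (j : Fin n) : Fin n → ℝ := fun j' => if j' = j then 1 else 0

lemma e_nonneg (j : Fin n) : 0 ≤ e j := by
  intro i; by_cases h : i = j <;> simp [e, h]

lemma eq_sum_e (x : Fin n → ℝ) : x = ∑ j, x j • e j := by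
  ext i
  simp [e, Finset.sum_apply, Pi.smul_apply, smul_eq_mul, mul_ite, Finset.sum_ite_eq]

lemma bilin_expand (bb : (Fin n → ℝ) →ₗ[ℝ] (Fin n → ℝ) →ₗ[ℝ] (Fin n → ℝ))
    (u v : Fin n → ℝ) :
    bb u v = ∑ j, ∑ l, (u j * v l) • bb (e j) (e l) := by
  conv_lhs => rw [eq_sum_e u, eq_sum_e v]
  simp only [map_sum, LinearMap.sum_apply]
  rw [Finset.sum_comm]
  refine Finset.sum_congr rfl fun j _ => Finset.sum_congr rfl fun l _ => ?_
  rw [_root_.map_smul, _root_.map_smul bb, LinearMap.smul_apply, smul_smul, mul_comm (v l)]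

lemma mulVec_nonneg' {A : Matrix (Fin n) (Fin n) ℝ} {v : Fin n → ℝ}
    (hA : ∀ i j, 0 ≤ A i j) (hv : 0 ≤ v) : 0 ≤ A *ᵥ v := by
  intro i
  show (0:ℝ) ≤ ∑ j, A i j * v j
  exact Finset.sum_nonneg fun j _ => mul_nonneg (hA i j) (hv j)

lemma bilin_mono {bb : (Fin n → ℝ) →ₗ[ℝ] (Fin n → ℝ) →ₗ[ℝ] (Fin n → ℝ)}
    (hbb : ∀ x y : Fin n → ℝ, 0 ≤ x → 0 ≤ y → 0 ≤ bb x y)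
    {x x' y y' : Fin n → ℝ} (hx : 0 ≤ x) (hxx : x ≤ x') (hy : 0 ≤ y) (hyy : y ≤ y') :
    bb x y ≤ bb x' y' := by
  have key : bb x' y' - bb x y = bb (x' - x) y' + bb x (y' - y) := by
    rw [map_sub bb x' x, LinearMap.sub_apply, map_sub (bb x) y' y]; abel
  have h1 := hbb (x' - x) y' (sub_nonneg.mpr hxx) (hy.trans hyy)
  have h2 := hbb x (y' - y) hx (sub_nonneg.mpr hyy)
  have h3 := add_nonneg h1 h2
  rw [← key] at h3
  exact sub_nonneg.mp h3

lemma toMatrix'_mulVec (f : (Fin n → ℝ) →ₗ[ℝ] (Fin n → ℝ)) (v : Fin n → ℝ) :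
    (LinearMap.toMatrix' f) *ᵥ v = f v := by
  rw [← Matrix.toLin'_apply, Matrix.toLin'_toMatrix']

lemma toMatrix'_entry (f : (Fin n → ℝ) →ₗ[ℝ] (Fin n → ℝ)) (i j : Fin n) :
    (LinearMap.toMatrix' f) i j = f (e j) i := by
  rw [LinearMap.toMatrix'_apply]
  have hs : Pi.single j (1:ℝ) = e j := by funext k; simp [e, Pi.single_apply]
  rw [hs]

lemma tendsto_bilin (bb : (Fin n → ℝ) →ₗ[ℝ] (Fin n → ℝ) →ₗ[ℝ] (Fin n → ℝ))
    {u v : ℕ → Fin n → ℝ} {u0 v0 : Fin n → ℝ}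
    (hu : ∀ j, Tendsto (fun m => u m j) atTop (𝓝 (u0 j)))
    (hv : ∀ j, Tendsto (fun m => v m j) atTop (𝓝 (v0 j))) (i : Fin n) :
    Tendsto (fun m => bb (u m) (v m) i) atTop (𝓝 (bb u0 v0 i)) := by
  have key : ∀ y w : Fin n → ℝ, bb y w i = ∑ j, ∑ l, (y j * w l) * bb (e j) (e l) i := by
    intro y w
    rw [bilin_expand bb y w]
    simp only [Finset.sum_apply, Pi.smul_apply, smul_eq_mul]
  have hfun : (fun m => bb (u m) (v m) i)
      = fun m => ∑ j, ∑ l, (u m j * v m l) * (bb (e j) (e l) i) :=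
    funext fun m => key (u m) (v m)
  rw [hfun, key u0 v0]
  exact tendsto_finset_sum _ fun j _ => tendsto_finset_sum _ fun l _ =>
    ((hu j).mul (hv l)).mul tendsto_const_nhds

lemma tendsto_mulVec (A : Matrix (Fin n) (Fin n) ℝ) {u : ℕ → Fin n → ℝ} {u0 : Fin n → ℝ}
    (hu : ∀ j, Tendsto (fun m => u m j) atTop (𝓝 (u0 j))) (i : Fin n) :
    Tendsto (fun m => (A *ᵥ u m) i) atTop (𝓝 ((A *ᵥ u0) i)) := by
  have key : ∀ w : Fin n → ℝ, (A *ᵥ w) i = ∑ j, A i j * w j := fun w => rfl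
  simp only [key]
  exact tendsto_finset_sum _ fun j _ => (hu j).const_mul _

/-- absolute value of a kernel vector of a Z-matrix -/
lemma zmat_kernel_abs {A : Matrix (Fin n) (Fin n) ℝ}
    (hz : ∀ i j, i ≠ j → A i j ≤ 0) {w : Fin n → ℝ} (hw : A *ᵥ w = 0) :
    A *ᵥ (fun i => |w i|) ≤ 0 := by
  intro i
  have hw0 : ∑ j, A i j * w j = 0 := congrFun hw i
  have hsplitw := Finset.add_sum_erase Finset.univ (fun j => A i j * w j) (Finset.mem_univ i)
  have hsplita := Finset.add_sum_erase Finset.univ (fun j => A i j * |w j|) (Finset.mem_univ i)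
  show (∑ j, A i j * |w j|) ≤ (0 : ℝ)
  have h1 : A i i * |w i| ≤ |A i i * w i| := by
    rw [abs_mul]
    exact mul_le_mul_of_nonneg_right (le_abs_self _) (abs_nonneg _)
  have h2 : |A i i * w i| = |∑ j ∈ Finset.univ.erase i, A i j * w j| := by
    rw [show A i i * w i = -∑ j ∈ Finset.univ.erase i, A i j * w j by
      linarith, abs_neg]
  have h3 : |∑ j ∈ Finset.univ.erase i, A i j * w j|
      ≤ ∑ j ∈ Finset.univ.erase i, |A i j * w j| := Finset.abs_sum_le_sum_abs _ _
  have h4 : ∑ j ∈ Finset.univ.erase i, |A i j * w j|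
      = -∑ j ∈ Finset.univ.erase i, A i j * |w j| := by
    rw [← Finset.sum_neg_distrib]
    refine Finset.sum_congr rfl fun j hj => ?_
    have hij : i ≠ j := (Finset.ne_of_mem_erase hj).symm
    rw [abs_mul, abs_of_nonpos (hz i j hij)]
    ring
  have h5 := h1.trans (h2 ▸ (h3.trans_eq h4))
  linarith



/-- A Z-matrix with positive row sums is invertible with entrywise nonnegative inverse. -/
lemma zmat_rowpos_inv (D : Matrix (Fin n) (Fin n) ℝ)
    (hz : ∀ i j, i ≠ j → D i j ≤ 0) (hrow : ∀ i, 0 < ∑ j, D i j) :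
    IsUnit D.det ∧ ∀ i j, 0 ≤ D⁻¹ i j := by
  rcases isEmpty_or_nonempty (Fin n) with hemp | hne
  · refine ⟨by simp [Matrix.det_isEmpty], fun i _ => (hemp.false i).elim⟩
  -- the shift
  set s : ℝ := 1 + ∑ i, ∑ j, |D i j| with hs_def
  have habs : ∀ i j, |D i j| ≤ s - 1 := by
    intro i j
    have h1 : |D i j| ≤ ∑ j', |D i j'| :=
      Finset.single_le_sum (f := fun j' => |D i j'|) (fun _ _ => abs_nonneg _)
        (Finset.mem_univ j)
    have h2 : ∑ j', |D i j'| ≤ ∑ i', ∑ j', |D i' j'| :=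
      Finset.single_le_sum (f := fun i' => ∑ j', |D i' j'|)
        (fun _ _ => Finset.sum_nonneg fun _ _ => abs_nonneg _) (Finset.mem_univ i)
    simp only [hs_def]; linarith
  have hs1 : (1:ℝ) ≤ s := by
    have : (0:ℝ) ≤ ∑ i, ∑ j, |D i j| :=
      Finset.sum_nonneg fun _ _ => Finset.sum_nonneg fun _ _ => abs_nonneg _
    simp only [hs_def]; linarith
  have hspos : (0:ℝ) < s := lt_of_lt_of_le one_pos hs1
  set C : Matrix (Fin n) (Fin n) ℝ := s • (1 : Matrix (Fin n) (Fin n) ℝ) - D with hC_def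
  have hCentry : ∀ i j, C i j = s * (if i = j then 1 else 0) - D i j := by
    intro i j
    simp [hC_def, Matrix.sub_apply, Matrix.smul_apply, Matrix.one_apply, smul_eq_mul]
  have hCnn : ∀ i j, 0 ≤ C i j := by
    intro i j
    rw [hCentry]
    rcases eq_or_ne i j with h | h
    · subst h
      have h2 := (abs_le.mp (habs i i)).2
      rw [if_pos rfl, mul_one]
      linarith
    · rw [if_neg h, mul_zero]
      have := hz i j h
      linarith
  -- row sums of C
  set μ : ℝ := Finset.univ.inf' (Finset.univ_nonempty) (fun i => ∑ j, D i j) with hμ_def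
  have hμpos : 0 < μ := by
    rw [hμ_def, Finset.lt_inf'_iff]
    exact fun i _ => hrow i
  have hμle : ∀ i, μ ≤ ∑ j, D i j := fun i => Finset.inf'_le _ (Finset.mem_univ i)
  set θ : ℝ := s - μ with hθ_def
  have hθs : θ < s := by simp only [hθ_def]; linarith
  have hθ0 : 0 ≤ θ := by
    obtain ⟨i₀⟩ := hne
    have h1 : ∑ j, D i₀ j ≤ ∑ j, |D i₀ j| :=
      Finset.sum_le_sum fun j _ => le_abs_self _
    have h2 : ∑ j, |D i₀ j| ≤ s - 1 := by
      have := habs i₀ i₀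
      have h3 : ∑ j', |D i₀ j'| ≤ ∑ i', ∑ j', |D i' j'| :=
        Finset.single_le_sum (f := fun i' => ∑ j', |D i' j'|)
          (fun _ _ => Finset.sum_nonneg fun _ _ => abs_nonneg _) (Finset.mem_univ i₀)
      simp only [hs_def]; linarith
    have := hμle i₀
    simp only [hθ_def]; linarith
  have hCrow : ∀ i, ∑ j, C i j ≤ θ := by
    intro i
    have hsum : ∑ j, C i j = s - ∑ j, D i j := by
      rw [Finset.sum_congr rfl (fun j _ => hCentry i j), Finset.sum_sub_distrib,
        ← Finset.mul_sum]
      simp [Finset.sum_ite_eq]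
    rw [hsum]
    have := hμle i
    simp only [hθ_def]; linarith
  -- powers of C
  have hpow : ∀ m : ℕ, (∀ i j, 0 ≤ (C ^ m) i j) ∧ (∀ i, ∑ j, (C ^ m) i j ≤ θ ^ m) := by
    intro m
    induction m with
    | zero =>
        constructor
        · intro i j; simp [Matrix.one_apply]; split <;> norm_num
        · intro i; simp [Matrix.one_apply]
    | succ m ih =>
        have hmul : C ^ (m+1) = C ^ m * C := pow_succ C m
        constructor
        · intro i j
          rw [hmul, Matrix.mul_apply]
          exact Finset.sum_nonneg fun k _ => mul_nonneg (ih.1 i k) (hCnn k j)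
        · intro i
          rw [hmul]
          have h1 : ∑ j, (C ^ m * C) i j = ∑ k, (C ^ m) i k * (∑ j, C k j) := by
            simp only [Matrix.mul_apply, Finset.mul_sum]
            exact Finset.sum_comm
          rw [h1, pow_succ]
          have h2 : ∑ k, (C ^ m) i k * (∑ j, C k j) ≤ ∑ k, (C ^ m) i k * θ :=
            Finset.sum_le_sum fun k _ => mul_le_mul_of_nonneg_left (hCrow k) (ih.1 i k)
          have h3 : ∑ k, (C ^ m) i k * θ = (∑ k, (C ^ m) i k) * θ := by
            rw [Finset.sum_mul]
          have h4 : (∑ k, (C ^ m) i k) * θ ≤ θ ^ m * θ :=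
            mul_le_mul_of_nonneg_right (ih.2 i) hθ0
          linarith
  have hentry : ∀ (m : ℕ) (i j : Fin n), (C ^ m) i j ≤ θ ^ m := by
    intro m i j
    have h1 : (C ^ m) i j ≤ ∑ j', (C ^ m) i j' :=
      Finset.single_le_sum (fun j' _ => (hpow m).1 i j') (Finset.mem_univ j)
    exact h1.trans ((hpow m).2 i)
  -- partial sums of the Neumann series
  set Sp : ℕ → Matrix (Fin n) (Fin n) ℝ :=
    fun m => ∑ k ∈ Finset.range m, (s⁻¹) ^ (k+1) • C ^ k with hSp_def
  have hSp_entry_nn : ∀ m i j, 0 ≤ Sp m i j := by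
    intro m i j
    simp only [hSp_def, Matrix.sum_apply, Matrix.smul_apply, smul_eq_mul]
    exact Finset.sum_nonneg fun k _ =>
      mul_nonneg (pow_nonneg (inv_nonneg.mpr hspos.le) _) ((hpow k).1 i j)
  have hSp_succ : ∀ m, Sp (m+1) = Sp m + (s⁻¹) ^ (m+1) • C ^ m := by
    intro m; simp only [hSp_def]; exact Finset.sum_range_succ _ m
  have hSp_mono : ∀ m i j, Sp m i j ≤ Sp (m+1) i j := by
    intro m i j
    rw [hSp_succ m, Matrix.add_apply, Matrix.smul_apply, smul_eq_mul]
    have : 0 ≤ (s⁻¹) ^ (m+1) * (C ^ m) i j :=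
      mul_nonneg (pow_nonneg (inv_nonneg.mpr hspos.le) _) ((hpow m).1 i j)
    linarith
  set r : ℝ := θ / s with hr_def
  have hr0 : 0 ≤ r := div_nonneg hθ0 hspos.le
  have hr1 : r < 1 := (div_lt_one hspos).mpr hθs
  have hterm_bound : ∀ (k : ℕ) (i j : Fin n), (s⁻¹) ^ (k+1) * (C ^ k) i j ≤ s⁻¹ * r ^ k := by
    intro k i j
    have h1 : (s⁻¹) ^ (k+1) * (C ^ k) i j ≤ (s⁻¹) ^ (k+1) * θ ^ k :=
      mul_le_mul_of_nonneg_left (hentry k i j) (pow_nonneg (inv_nonneg.mpr hspos.le) _)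
    have h2 : (s⁻¹) ^ (k+1) * θ ^ k = s⁻¹ * r ^ k := by
      have hrk : r ^ k = θ ^ k * (s⁻¹) ^ k := by
        rw [hr_def, div_pow, div_eq_mul_inv, inv_pow]
      rw [hrk, pow_succ']
      ring
    linarith
  have hSp_bdd : ∀ m i j, Sp m i j ≤ s⁻¹ * (1 / (1 - r)) := by
    intro m i j
    have h1 : Sp m i j = ∑ k ∈ Finset.range m, (s⁻¹) ^ (k+1) * (C ^ k) i j := by
      simp only [hSp_def, Matrix.sum_apply, Matrix.smul_apply, smul_eq_mul]
    have h2 : ∑ k ∈ Finset.range m, (s⁻¹) ^ (k+1) * (C ^ k) i j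
        ≤ ∑ k ∈ Finset.range m, s⁻¹ * r ^ k :=
      Finset.sum_le_sum fun k _ => hterm_bound k i j
    have h3 : ∑ k ∈ Finset.range m, s⁻¹ * r ^ k = s⁻¹ * ∑ k ∈ Finset.range m, r ^ k := by
      rw [Finset.mul_sum]
    have h4 : ∑ k ∈ Finset.range m, r ^ k ≤ 1 / (1 - r) := by
      have hd : 0 < 1 - r := by linarith
      have hgs := geom_sum_eq (by linarith : r ≠ 1) m
      have heq : (r ^ m - 1) / (r - 1) = (1 - r ^ m) / (1 - r) := by
        rw [show r ^ m - 1 = -(1 - r ^ m) by ring, show r - 1 = -(1 - r) by ring,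
          neg_div_neg_eq]
      rw [hgs, heq]
      have h5 : 0 ≤ r ^ m := pow_nonneg hr0 m
      gcongr
      linarith
    have h5 : s⁻¹ * ∑ k ∈ Finset.range m, r ^ k ≤ s⁻¹ * (1 / (1 - r)) :=
      mul_le_mul_of_nonneg_left h4 (inv_nonneg.mpr hspos.le)
    linarith
  -- the limit
  set Sl : Matrix (Fin n) (Fin n) ℝ := Matrix.of (fun i j => ⨆ m, Sp m i j) with hSl_def
  have hbdd : ∀ i j, BddAbove (Set.range fun m => Sp m i j) := by
    intro i j
    exact ⟨s⁻¹ * (1 / (1 - r)), by rintro y ⟨m, rfl⟩; exact hSp_bdd m i j⟩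
  have htendS : ∀ i j, Tendsto (fun m => Sp m i j) atTop (𝓝 (Sl i j)) := by
    intro i j
    exact tendsto_atTop_ciSup (monotone_nat_of_le_succ fun m => hSp_mono m i j) (hbdd i j)
  -- telescoping identity
  have htel : ∀ m, D * Sp m = 1 - (s⁻¹) ^ m • C ^ m := by
    intro m
    induction m with
    | zero => simp [hSp_def]
    | succ m ih =>
        rw [hSp_succ m, Matrix.mul_add, ih, Matrix.mul_smul]
        have hDC : D * C ^ m = s • C ^ m - C ^ (m+1) := by
          have hD_eq : D = s • (1 : Matrix (Fin n) (Fin n) ℝ) - C := by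
            rw [hC_def]; abel
          rw [hD_eq, Matrix.sub_mul, Matrix.smul_mul, Matrix.one_mul, ← pow_succ']
        rw [hDC, smul_sub, smul_smul]
        have hss : (s⁻¹) ^ (m+1) * s = (s⁻¹) ^ m := by
          rw [pow_succ, mul_assoc, inv_mul_cancel₀ hspos.ne', mul_one]
        rw [hss]
        abel
  -- D * Sl = 1
  have hDS : D * Sl = 1 := by
    ext i j
    have h1 : Tendsto (fun m => (D * Sp m) i j) atTop (𝓝 ((D * Sl) i j)) := by
      have hform : ∀ (X : Matrix (Fin n) (Fin n) ℝ), (D * X) i j = ∑ k, D i k * X k j :=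
        fun X => Matrix.mul_apply
      simp only [hform]
      exact tendsto_finset_sum _ fun k _ => ((htendS k j).const_mul _)
    have h2 : Tendsto (fun m => (D * Sp m) i j) atTop (𝓝 ((1 : Matrix (Fin n) (Fin n) ℝ) i j)) := by
      have hform2 : ∀ m, (D * Sp m) i j
          = (1 : Matrix (Fin n) (Fin n) ℝ) i j - (s⁻¹) ^ m * (C ^ m) i j := by
        intro m
        rw [htel m, Matrix.sub_apply, Matrix.smul_apply, smul_eq_mul]
      simp only [hform2]
      have hnull : Tendsto (fun m => (s⁻¹) ^ m * (C ^ m) i j) atTop (𝓝 0) := by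
        have hub : ∀ m : ℕ, (s⁻¹) ^ m * (C ^ m) i j ≤ r ^ m := by
          intro m
          have h1 : (s⁻¹) ^ m * (C ^ m) i j ≤ (s⁻¹) ^ m * θ ^ m :=
            mul_le_mul_of_nonneg_left (hentry m i j) (pow_nonneg (inv_nonneg.mpr hspos.le) _)
          have h2 : (s⁻¹) ^ m * θ ^ m = r ^ m := by
            rw [hr_def, div_pow, ← mul_pow]
            congr 1
            field_simp
            rw [← mul_pow, div_mul_cancel₀ θ hspos.ne']
          linarith
        have hlb : ∀ m : ℕ, 0 ≤ (s⁻¹) ^ m * (C ^ m) i j := fun m =>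
          mul_nonneg (pow_nonneg (inv_nonneg.mpr hspos.le) _) ((hpow m).1 i j)
        have hr_tend : Tendsto (fun m : ℕ => r ^ m) atTop (𝓝 0) :=
          tendsto_pow_atTop_nhds_zero_of_lt_one hr0 hr1
        exact squeeze_zero hlb hub hr_tend
      have hconst : Tendsto (fun _ : ℕ => (1 : Matrix (Fin n) (Fin n) ℝ) i j) atTop
          (𝓝 ((1 : Matrix (Fin n) (Fin n) ℝ) i j)) := tendsto_const_nhds
      have := hconst.sub hnull
      simpa using this
    exact tendsto_nhds_unique h1 h2
  have hunit : IsUnit D.det := by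
    refine IsUnit.of_mul_eq_one Sl.det ?_
    rw [← Matrix.det_mul, hDS, Matrix.det_one]
  refine ⟨hunit, ?_⟩
  have hinv : D⁻¹ = Sl := Matrix.inv_eq_right_inv hDS
  intro i j
  rw [hinv]
  have h0 : Sp 0 i j ≤ Sl i j := le_ciSup (hbdd i j) 0
  have h1 : Sp 0 i j = 0 := by simp [hSp_def]
  exact le_of_eq_of_le h1.symm h0

/-- Homotopy lemma: a Z-matrix `B` such that `B + t•1` is invertible for every `t ≥ 0`
has entrywise nonnegative inverse. -/
lemma zmat_homotopy_inv (B : Matrix (Fin n) (Fin n) ℝ)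
    (hz : ∀ i j, i ≠ j → B i j ≤ 0)
    (hinv : ∀ t : ℝ, 0 ≤ t → IsUnit (B + t • (1 : Matrix (Fin n) (Fin n) ℝ)).det) :
    ∀ i j, 0 ≤ B⁻¹ i j := by
  set Bt : ℝ → Matrix (Fin n) (Fin n) ℝ := fun t => B + t • 1 with hBt_def
  have hBt_entry : ∀ (t : ℝ) i j, Bt t i j = B i j + t * (if i = j then 1 else 0) := by
    intro t i j
    simp [hBt_def, Matrix.add_apply, Matrix.smul_apply, Matrix.one_apply, smul_eq_mul]
  have hBtz : ∀ (t : ℝ) i j, i ≠ j → Bt t i j ≤ 0 := by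
    intro t i j hij
    rw [hBt_entry, if_neg hij, mul_zero, add_zero]
    exact hz i j hij
  set Pp : ℝ → Prop := fun t => ∀ i j, 0 ≤ (Bt t)⁻¹ i j with hPp_def
  -- F1 : large t
  set T : ℝ := 1 + ∑ i, ∑ j, |B i j| with hT_def
  have hT1 : (1:ℝ) ≤ T := by
    have : (0:ℝ) ≤ ∑ i, ∑ j, |B i j| :=
      Finset.sum_nonneg fun _ _ => Finset.sum_nonneg fun _ _ => abs_nonneg _
    simp only [hT_def]; linarith
  have hPbig : ∀ t : ℝ, T ≤ t → Pp t := by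
    intro t ht
    have hrow : ∀ i, 0 < ∑ j, Bt t i j := by
      intro i
      have hsum : ∑ j, Bt t i j = (∑ j, B i j) + t := by
        rw [Finset.sum_congr rfl (fun j _ => hBt_entry t i j), Finset.sum_add_distrib,
          ← Finset.mul_sum]
        simp [Finset.sum_ite_eq]
      rw [hsum]
      have h1 : -(T - 1) ≤ ∑ j, B i j := by
        have h2 : ∑ j, |B i j| ≤ ∑ i', ∑ j, |B i' j| :=
          Finset.single_le_sum (f := fun i' => ∑ j, |B i' j|)
            (fun _ _ => Finset.sum_nonneg fun _ _ => abs_nonneg _) (Finset.mem_univ i)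
        have h3 : -∑ j, |B i j| ≤ ∑ j, B i j := by
          rw [← Finset.sum_neg_distrib]
          exact Finset.sum_le_sum fun j _ => neg_abs_le _
        simp only [hT_def]; linarith
      linarith
    exact (zmat_rowpos_inv (Bt t) (hBtz t) hrow).2
  -- F2 : descent
  have hdesc : ∀ t₀ : ℝ, 0 ≤ t₀ → Pp t₀ →
      ∃ δ : ℝ, 0 < δ ∧ ∀ ε : ℝ, 0 ≤ ε → ε ≤ δ → Pp (t₀ - ε) := by
    intro t₀ ht₀ hQ
    have hXunit : IsUnit (Bt t₀).det := hinv t₀ ht₀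
    set Q : Matrix (Fin n) (Fin n) ℝ := (Bt t₀)⁻¹ with hQ_def
    have hQX : Bt t₀ * Q = 1 := Matrix.mul_nonsing_inv _ hXunit
    set q : ℝ := ∑ i, ∑ j, Q i j with hq_def
    have hq0 : 0 ≤ q :=
      Finset.sum_nonneg fun i _ => Finset.sum_nonneg fun j _ => hQ i j
    refine ⟨(1 + q)⁻¹, inv_pos.mpr (by linarith), ?_⟩
    intro ε hε hεδ
    have hrowsum : ∀ i, ∑ j, Q i j ≤ q :=
      fun i => Finset.single_le_sum (f := fun i' => ∑ j, Q i' j)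
        (fun i' _ => Finset.sum_nonneg fun j _ => hQ i' j) (Finset.mem_univ i)
    -- the correction factor
    have hYz : ∀ i j, i ≠ j → ((1 : Matrix (Fin n) (Fin n) ℝ) - ε • Q) i j ≤ 0 := by
      intro i j hij
      simp only [Matrix.sub_apply, Matrix.smul_apply, Matrix.one_apply_ne hij, smul_eq_mul]
      have := mul_nonneg hε (hQ i j)
      linarith
    have hYrow : ∀ i, 0 < ∑ j, ((1 : Matrix (Fin n) (Fin n) ℝ) - ε • Q) i j := by
      intro i
      have hsum : ∑ j, ((1 : Matrix (Fin n) (Fin n) ℝ) - ε • Q) i j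
          = 1 - ε * ∑ j, Q i j := by
        simp only [Matrix.sub_apply, Matrix.smul_apply, smul_eq_mul,
          Finset.sum_sub_distrib, ← Finset.mul_sum]
        congr 1
        simp [Matrix.one_apply, Finset.sum_ite_eq]
      rw [hsum]
      have h1 : ε * ∑ j, Q i j ≤ (1+q)⁻¹ * q := by
        apply mul_le_mul hεδ (hrowsum i) (Finset.sum_nonneg fun j _ => hQ i j)
        exact inv_nonneg.mpr (by linarith)
      have h2 : (1+q)⁻¹ * q < 1 := by
        rw [inv_mul_lt_iff₀ (by linarith)]
        linarith
      linarith
    obtain ⟨hYunit, hYinv⟩ := zmat_rowpos_inv _ hYz hYrow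
    have hfact : Bt (t₀ - ε) = Bt t₀ * ((1 : Matrix (Fin n) (Fin n) ℝ) - ε • Q) := by
      rw [Matrix.mul_sub, Matrix.mul_one, Matrix.mul_smul, hQX]
      have : Bt (t₀ - ε) = Bt t₀ - ε • (1 : Matrix (Fin n) (Fin n) ℝ) := by
        simp only [hBt_def]
        rw [sub_smul]
        abel
      rw [this]
    intro i j
    rw [hfact, Matrix.mul_inv_rev, Matrix.mul_apply]
    exact Finset.sum_nonneg fun k _ => mul_nonneg (hYinv i k) (hQ k j)
  -- continuity of entries of the inverse along the path
  have hcont : ∀ τ : ℝ, 0 ≤ τ → ∀ i j, ContinuousAt (fun t : ℝ => (Bt t)⁻¹ i j) τ := by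
    intro τ hτ i j
    have hA : Continuous Bt := by
      have h1 : Continuous fun t : ℝ => t • (1 : Matrix (Fin n) (Fin n) ℝ) :=
        continuous_id.smul continuous_const
      exact continuous_const.add h1
    have hdet : Continuous fun t => (Bt t).det := hA.matrix_det
    have hadj : Continuous fun t => (Bt t).adjugate i j := by
      have h2 := hA.matrix_adjugate
      exact (continuous_apply j).comp ((continuous_apply i).comp h2)
    have hform : (fun t : ℝ => (Bt t)⁻¹ i j)
        = fun t => ((Bt t).det)⁻¹ * (Bt t).adjugate i j := by
      funext t
      rw [Matrix.inv_def, Matrix.smul_apply, smul_eq_mul, Ring.inverse_eq_inv]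
    rw [hform]
    have hdet0 : (Bt τ).det ≠ 0 := (hinv τ hτ).ne_zero
    exact (hdet.continuousAt.inv₀ hdet0).mul hadj.continuousAt
  -- glue by a continuous-induction argument on [0, T]
  set A : Set ℝ := {t : ℝ | 0 ≤ t ∧ ∀ r : ℝ, t ≤ r → Pp r} with hA_def
  have hTA : T ∈ A := ⟨by linarith, fun r hr => hPbig r hr⟩
  have hbddb : BddBelow A := ⟨0, fun t ht => ht.1⟩
  set τ := sInf A with hτ_def
  have hτ0 : 0 ≤ τ := le_csInf ⟨T, hTA⟩ fun t ht => ht.1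
  have hPgt : ∀ r : ℝ, τ < r → Pp r := by
    intro r hr
    obtain ⟨t, htA, htr⟩ := exists_lt_of_csInf_lt ⟨T, hTA⟩ hr
    exact htA.2 r htr.le
  have hPτ : Pp τ := by
    intro i j
    have hseq : Tendsto (fun k : ℕ => τ + 1/((k:ℝ)+1)) atTop (𝓝 τ) := by
      have h1 := tendsto_one_div_add_atTop_nhds_zero_nat (𝕜 := ℝ)
      simpa using tendsto_const_nhds.add h1
    have hct := (hcont τ hτ0 i j).tendsto.comp hseq
    refine ge_of_tendsto hct (Filter.Eventually.of_forall fun k => ?_)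
    have h2 : (0:ℝ) < 1/((k:ℝ)+1) := by positivity
    exact hPgt _ (by linarith) i j
  -- τ must be 0
  have hτ_eq : τ = 0 := by
    by_contra h
    have hpos : 0 < τ := lt_of_le_of_ne hτ0 (Ne.symm h)
    obtain ⟨δ, hδ, hstep⟩ := hdesc τ hτ0 hPτ
    have hε0 : 0 < min δ τ := lt_min hδ hpos
    have hmem : τ - min δ τ ∈ A := by
      constructor
      · have := min_le_right δ τ
        show (0:ℝ) ≤ τ - min δ τ
        linarith
      · intro r hr
        rcases le_or_gt τ r with h2 | h2
        · rcases eq_or_lt_of_le h2 with h3 | h3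
          · exact h3 ▸ hPτ
          · exact hPgt r h3
        · have h4 : 0 ≤ τ - r := by linarith
          have h5 : τ - r ≤ δ := by
            have := min_le_left δ τ
            linarith
          have h6 := hstep (τ - r) h4 h5
          have h7 : τ - (τ - r) = r := by ring
          rw [h7] at h6
          exact h6
    have hle := csInf_le hbddb hmem
    rw [← hτ_def] at hle
    linarith
  have hfin : Pp 0 := hτ_eq ▸ hPτ
  intro i j
  have hfin2 := hfin i j
  have hB0 : Bt 0 = B := by
    simp [hBt_def]
  rw [hB0] at hfin2
  exact hfin2
/-- Any nonnegative supersolution of the QVE dominates the minimal solution. -/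
lemma supersol_ge (M : Matrix (Fin n) (Fin n) ℝ)
    (hMz : ∀ i j, i ≠ j → M i j ≤ 0)
    (a : Fin n → ℝ) (ha : 0 ≤ a)
    (b : (Fin n → ℝ) →ₗ[ℝ] (Fin n → ℝ) →ₗ[ℝ] (Fin n → ℝ))
    (hb : ∀ x y : Fin n → ℝ, 0 ≤ x → 0 ≤ y → 0 ≤ b x y)
    (xs : Fin n → ℝ)
    (hxs_min : ∀ s : Fin n → ℝ, 0 ≤ s → M *ᵥ s = a + b s s → xs ≤ s)
    (z : Fin n → ℝ) (hz0 : 0 ≤ z) (hsuper : a + b z z ≤ M *ᵥ z) :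
    xs ≤ z := by
  set α : ℝ := (1 + ∑ i, |M i i|)⁻¹ with hα_def
  have hsum_nn : (0:ℝ) ≤ ∑ i, |M i i| := Finset.sum_nonneg fun _ _ => abs_nonneg _
  have hαpos : 0 < α := by
    rw [hα_def]
    exact inv_pos.mpr (by linarith)
  have hαM : ∀ i, α * M i i ≤ 1 := by
    intro i
    have h1 : M i i ≤ |M i i| := le_abs_self _
    have h2 : |M i i| ≤ ∑ i', |M i' i'| :=
      Finset.single_le_sum (f := fun i' => |M i' i'|) (fun _ _ => abs_nonneg _)
        (Finset.mem_univ i)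
    have h3 : α * (1 + ∑ i', |M i' i'|) = 1 := by
      rw [hα_def]
      exact inv_mul_cancel₀ (by linarith)
    nlinarith [hαpos.le]
  set R : Matrix (Fin n) (Fin n) ℝ := (1 : Matrix (Fin n) (Fin n) ℝ) - α • M with hR_def
  have hRnn : ∀ i j, 0 ≤ R i j := by
    intro i j
    have hentry : R i j = (if i = j then 1 else 0) - α * M i j := by
      simp [hR_def, Matrix.sub_apply, Matrix.smul_apply, Matrix.one_apply, smul_eq_mul]
    rw [hentry]
    rcases eq_or_ne i j with h | h
    · subst h; rw [if_pos rfl]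
      have := hαM i
      linarith
    · rw [if_neg h]
      have := mul_nonneg hαpos.le (neg_nonneg.mpr (hMz i j h))
      linarith
  have hRv : ∀ v : Fin n → ℝ, R *ᵥ v = v - α • (M *ᵥ v) := by
    intro v
    rw [hR_def, Matrix.sub_mulVec, Matrix.one_mulVec, Matrix.smul_mulVec]
  set G : (Fin n → ℝ) → (Fin n → ℝ) := fun y => R *ᵥ y + α • (a + b y y) with hG_def
  have hGmono : ∀ y y' : Fin n → ℝ, 0 ≤ y → y ≤ y' → G y ≤ G y' := by
    intro y y' hy hyy
    have h1 : R *ᵥ y ≤ R *ᵥ y' := by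
      have h2 : 0 ≤ R *ᵥ (y' - y) := by
        intro i
        show (0:ℝ) ≤ ∑ j, R i j * (y' - y) j
        exact Finset.sum_nonneg fun j _ => mul_nonneg (hRnn i j)
          (by have := hyy j; simp [Pi.sub_apply]; linarith)
      have h3 : R *ᵥ (y' - y) = R *ᵥ y' - R *ᵥ y := Matrix.mulVec_sub R y' y
      rw [h3] at h2
      exact sub_nonneg.mp h2
    have h4 : b y y ≤ b y' y' := bilin_mono hb hy hyy hy hyy
    intro i
    have h5 := h1 i
    have h6 := h4 i
    simp only [hG_def, Pi.add_apply, Pi.smul_apply, smul_eq_mul]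
    have h7 : (a + b y y) i ≤ (a + b y' y') i := by
      simp only [Pi.add_apply]; linarith
    have h8 := mul_le_mul_of_nonneg_left h7 hαpos.le
    simp only [Pi.add_apply] at h8
    linarith
  have hGz : G z ≤ z := by
    intro i
    have h1 := hsuper i
    simp only [hG_def, Pi.add_apply, Pi.smul_apply, smul_eq_mul]
    have h2 := congrFun (hRv z) i
    simp only [Pi.sub_apply, Pi.smul_apply, smul_eq_mul] at h2
    rw [h2]
    simp only [Pi.add_apply] at h1
    nlinarith [hαpos.le]
  -- the iteration
  set Y : ℕ → Fin n → ℝ := fun m => G^[m] 0 with hY_def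
  have hY0 : Y 0 = 0 := rfl
  have hYsucc : ∀ m, Y (m+1) = G (Y m) := by
    intro m
    simp only [hY_def]
    exact Function.iterate_succ_apply' G m 0
  have hG0 : 0 ≤ G 0 := by
    intro i
    simp only [hG_def, Pi.add_apply, Pi.smul_apply, smul_eq_mul]
    have h1 : (R *ᵥ (0 : Fin n → ℝ)) i = 0 := by rw [Matrix.mulVec_zero]; rfl
    rw [h1]
    have h2 : b (0 : Fin n → ℝ) (0 : Fin n → ℝ) = 0 := by rw [map_zero]
    rw [h2]
    simp only [Pi.add_apply, Pi.zero_apply, add_zero, zero_add]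
    exact mul_nonneg hαpos.le (ha i)
  have hinv : ∀ m, 0 ≤ Y m ∧ Y m ≤ Y (m+1) ∧ Y m ≤ z := by
    intro m
    induction m with
    | zero =>
        refine ⟨le_rfl, ?_, hz0⟩
        rw [hY0, hYsucc 0, hY0]
        exact hG0
    | succ m ih =>
        obtain ⟨h1, h2, h3⟩ := ih
        have h4 : 0 ≤ Y (m+1) := h1.trans h2
        refine ⟨h4, ?_, ?_⟩
        · calc Y (m+1) = G (Y m) := hYsucc m
            _ ≤ G (Y (m+1)) := hGmono _ _ h1 h2
            _ = Y (m+1+1) := (hYsucc (m+1)).symm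
        · rw [hYsucc m]
          exact (hGmono _ _ h1 h3).trans hGz
  -- limit
  have hmono : ∀ i, Monotone fun m => Y m i :=
    fun i => monotone_nat_of_le_succ fun m => (hinv m).2.1 i
  have hbdd : ∀ i, BddAbove (Set.range fun m => Y m i) := by
    intro i
    exact ⟨z i, by rintro y ⟨m, rfl⟩; exact (hinv m).2.2 i⟩
  set yb : Fin n → ℝ := fun i => ⨆ m, Y m i with hyb_def
  have htend : ∀ i, Tendsto (fun m => Y m i) atTop (𝓝 (yb i)) :=
    fun i => tendsto_atTop_ciSup (hmono i) (hbdd i)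
  have hyb0 : 0 ≤ yb := by
    intro i
    have := le_ciSup (hbdd i) 0
    have h0 : Y 0 i = 0 := by rw [hY0]; rfl
    exact le_of_eq_of_le h0.symm this
  have hybz : yb ≤ z := by
    intro i
    exact ciSup_le fun m => (hinv m).2.2 i
  -- fixed point
  have hfix : ∀ i, (G yb) i = yb i := by
    intro i
    have h1 : Tendsto (fun m => Y (m+1) i) atTop (𝓝 (yb i)) :=
      (htend i).comp (tendsto_add_atTop_nat 1)
    have h2 : Tendsto (fun m => (G (Y m)) i) atTop (𝓝 ((G yb) i)) := by
      have hmul : Tendsto (fun m => (R *ᵥ Y m) i) atTop (𝓝 ((R *ᵥ yb) i)) := by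
        have hform : ∀ w : Fin n → ℝ, (R *ᵥ w) i = ∑ j, R i j * w j := fun w => rfl
        simp only [hform]
        exact tendsto_finset_sum _ fun j _ => ((htend j).const_mul _)
      have hbb : Tendsto (fun m => b (Y m) (Y m) i) atTop (𝓝 (b yb yb i)) :=
        tendsto_bilin b htend htend i
      have hsum : Tendsto (fun m => (R *ᵥ Y m) i + α * (a i + b (Y m) (Y m) i)) atTop
          (𝓝 ((R *ᵥ yb) i + α * (a i + b yb yb i))) :=
        hmul.add ((tendsto_const_nhds.add hbb).const_mul α)
      have hform2 : ∀ w : Fin n → ℝ, (G w) i = (R *ᵥ w) i + α * (a i + b w w i) := by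
        intro w
        simp only [hG_def, Pi.add_apply, Pi.smul_apply, smul_eq_mul]
      simp only [hform2]
      exact hsum
    have h3 : ∀ m, Y (m+1) i = (G (Y m)) i := fun m => by rw [hYsucc m]
    simp only [h3] at h1
    exact tendsto_nhds_unique h2 h1
  have hsol : M *ᵥ yb = a + b yb yb := by
    funext i
    have h1 := hfix i
    have h2 := congrFun (hRv yb) i
    simp only [hG_def, Pi.add_apply, Pi.smul_apply, smul_eq_mul] at h1
    simp only [Pi.sub_apply, Pi.smul_apply, smul_eq_mul] at h2
    rw [h2] at h1
    simp only [Pi.add_apply]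
    have := hαpos.ne'
    nlinarith [h1]
  have := hxs_min yb hyb0 hsol
  exact this.trans hybz

end QVEAux

set_option maxHeartbeats 1000000

/-- Convergence of the functional iteration `J(x_k) x_{k+1} = g(x_k)` for the QVE,
with `J(x) = N - b₁(·,x)` and `g(x) = a + P x + b₂(x,x)`, under the nondegeneracy
condition: the iterates are well defined, increase monotonically to the minimal
solution `x*`, and satisfy `F(x_k) ≤ 0`. -/
theorem qve_functional_iteration_converges {n : ℕ}
    (M : Matrix (Fin n) (Fin n) ℝ) (hM : IsNsMMat M)
    (a : Fin n → ℝ) (ha : 0 ≤ a)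
    (b b₁ b₂ : (Fin n → ℝ) →ₗ[ℝ] (Fin n → ℝ) →ₗ[ℝ] (Fin n → ℝ))
    (hb : ∀ x y : Fin n → ℝ, 0 ≤ x → 0 ≤ y → 0 ≤ b x y)
    (hb₁ : ∀ x y : Fin n → ℝ, 0 ≤ x → 0 ≤ y → 0 ≤ b₁ x y)
    (hb₂ : ∀ x y : Fin n → ℝ, 0 ≤ x → 0 ≤ y → 0 ≤ b₂ x y)
    (hbsplit : b = b₁ + b₂)
    (N P : Matrix (Fin n) (Fin n) ℝ) (hN : IsMMat N) (hP : ∀ i j, 0 ≤ P i j)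
    (hMsplit : M = N - P)
    -- the minimal nonnegative solution, positive, with nonsingular derivatives below it
    (xs : Fin n → ℝ) (hxs_nonneg : 0 ≤ xs) (hxs_sol : M *ᵥ xs = a + b xs xs)
    (hxs_min : ∀ s : Fin n → ℝ, 0 ≤ s → M *ᵥ s = a + b s s → xs ≤ s)
    (hxs_pos : ∀ i, 0 < xs i)
    (hnondeg : ∀ x : Fin n → ℝ, 0 ≤ x → x ≤ xs → x ≠ xs →
      IsNsMMat (M - LinearMap.toMatrix' (b x) - LinearMap.toMatrix' (b.flip x)))
    -- the functional iteration
    (J : (Fin n → ℝ) → Matrix (Fin n) (Fin n) ℝ)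
    (hJ : ∀ x, J x = N - LinearMap.toMatrix' (b₁.flip x))
    (g : (Fin n → ℝ) → Fin n → ℝ)
    (hg : ∀ x, g x = a + P *ᵥ x + b₂ x x)
    (x : ℕ → Fin n → ℝ) (hx0_nonneg : 0 ≤ x 0) (hx0_le : x 0 ≤ xs)
    (hx0_F : M *ᵥ x 0 ≤ a + b (x 0) (x 0))
    (hrec : ∀ k, x (k + 1) = (J (x k))⁻¹ *ᵥ g (x k)) :
    (∀ k, IsUnit (J (x k)).det) ∧
    (∀ k, x k ≤ x (k + 1) ∧ x (k + 1) ≤ xs) ∧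
    Filter.Tendsto x Filter.atTop (nhds xs) ∧
    (∀ k, M *ᵥ x k ≤ a + b (x k) (x k)) := by
  classical
  obtain ⟨s₀, P₀, hP₀nn, _, hNdec⟩ := hN
  have hNz : ∀ i j, i ≠ j → N i j ≤ 0 := by
    intro i j hij
    rw [hNdec]
    simp only [Matrix.sub_apply, Matrix.smul_apply, Matrix.one_apply_ne hij, smul_eq_mul,
      mul_zero]
    have := hP₀nn i j
    linarith
  have hMz : ∀ i j, i ≠ j → M i j ≤ 0 := by
    intro i j hij
    rw [hMsplit]
    simp only [Matrix.sub_apply]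
    have h1 := hP i j
    have h2 := hNz i j hij
    linarith
  have hbapp : ∀ u v : Fin n → ℝ, b u v = b₁ u v + b₂ u v := by
    intro u v; rw [hbsplit]; rfl
  have hJmv : ∀ x0 v : Fin n → ℝ, (J x0) *ᵥ v = N *ᵥ v - b₁ v x0 := by
    intro x0 v
    rw [hJ, Matrix.sub_mulVec, QVEAux.toMatrix'_mulVec]
    rfl
  have hJz : ∀ x0 : Fin n → ℝ, 0 ≤ x0 → ∀ i j, i ≠ j → (J x0) i j ≤ 0 := by
    intro x0 hx0 i j hij
    rw [hJ]
    simp only [Matrix.sub_apply]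
    rw [QVEAux.toMatrix'_entry]
    have h1 := hNz i j hij
    have h2 : (0:ℝ) ≤ (b₁.flip x0) (QVEAux.e j) i := by
      have h3 := hb₁ (QVEAux.e j) x0 (QVEAux.e_nonneg j) hx0
      have h4 : (b₁.flip x0) (QVEAux.e j) = b₁ (QVEAux.e j) x0 := LinearMap.flip_apply b₁ _ _
      rw [h4]
      exact h3 i
    linarith
  have hsuper_ge : ∀ z : Fin n → ℝ, 0 ≤ z → a + b z z ≤ M *ᵥ z → xs ≤ z :=
    fun z hz hs => QVEAux.supersol_ge M hMz a ha b hb xs hxs_min z hz hs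
  -- Invertibility of J(x) + t•1 for 0 ≤ x ≤ xs, t ≥ 0
  have hJunit_t : ∀ x0 : Fin n → ℝ, 0 ≤ x0 → x0 ≤ xs →
      ∀ t : ℝ, 0 ≤ t → IsUnit ((J x0) + t • (1 : Matrix (Fin n) (Fin n) ℝ)).det := by
    intro x0 hx0 hx0xs t ht
    by_contra hdet
    have hdet0 : ((J x0) + t • (1 : Matrix (Fin n) (Fin n) ℝ)).det = 0 := by
      by_contra h
      exact hdet (isUnit_iff_ne_zero.mpr h)
    obtain ⟨w, hw0, hww⟩ := (Matrix.exists_mulVec_eq_zero_iff).mpr hdet0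
    set A := (J x0) + t • (1 : Matrix (Fin n) (Fin n) ℝ) with hA_def
    have hAz : ∀ i j, i ≠ j → A i j ≤ 0 := by
      intro i j hij
      simp only [hA_def, Matrix.add_apply, Matrix.smul_apply, Matrix.one_apply_ne hij,
        smul_eq_mul, mul_zero, add_zero]
      exact hJz x0 hx0 i j hij
    have habsle := QVEAux.zmat_kernel_abs hAz hww
    set w' : Fin n → ℝ := fun i => |w i| with hw'_def
    have hw'nn : 0 ≤ w' := fun i => abs_nonneg _
    have hJw' : ∀ i, ((J x0) *ᵥ w') i ≤ 0 := by
      intro i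
      have h1 := habsle i
      simp only [Pi.zero_apply] at h1
      have h2 : (A *ᵥ w') i = ((J x0) *ᵥ w') i + t * w' i := by
        rw [hA_def, Matrix.add_mulVec, Matrix.smul_mulVec, Matrix.one_mulVec]
        simp [Pi.add_apply, Pi.smul_apply, smul_eq_mul]
      have h3 : 0 ≤ t * w' i := mul_nonneg ht (hw'nn i)
      rw [h2] at h1
      linarith
    obtain ⟨i₀, hi₀⟩ : ∃ i, w i ≠ 0 := by
      by_contra h
      push_neg at h
      exact hw0 (funext h)
    haveI : Nonempty (Fin n) := ⟨i₀⟩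
    set mw : ℝ := Finset.univ.sup' Finset.univ_nonempty w' with hmw_def
    have hmwpos : 0 < mw := by
      have h1 : w' i₀ ≤ mw := Finset.le_sup' w' (Finset.mem_univ i₀)
      have h2 : 0 < w' i₀ := abs_pos.mpr hi₀
      linarith
    set mx : ℝ := Finset.univ.inf' Finset.univ_nonempty xs with hmx_def
    have hmxpos : 0 < mx := by
      rw [hmx_def, Finset.lt_inf'_iff]
      exact fun i _ => hxs_pos i
    set c : ℝ := mx / mw with hc_def
    have hcpos : 0 < c := div_pos hmxpos hmwpos
    set u : Fin n → ℝ := c • w' with hu_def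
    have hu0 : 0 ≤ u := fun i => mul_nonneg hcpos.le (hw'nn i)
    have hule : u ≤ xs := by
      intro i
      have h1 : w' i ≤ mw := Finset.le_sup' _ (Finset.mem_univ i)
      have h2 : mx ≤ xs i := Finset.inf'_le _ (Finset.mem_univ i)
      have h3 : c * w' i ≤ c * mw := mul_le_mul_of_nonneg_left h1 hcpos.le
      have h4 : c * mw = mx := div_mul_cancel₀ mx hmwpos.ne'
      show c * w' i ≤ xs i
      linarith
    have hui₀ : 0 < u i₀ := mul_pos hcpos (abs_pos.mpr hi₀)
    have hJu : ∀ i, ((J x0) *ᵥ u) i ≤ 0 := by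
      intro i
      have h1 : ((J x0) *ᵥ u) i = c * (((J x0) *ᵥ w') i) := by
        rw [hu_def, Matrix.mulVec_smul]
        simp [Pi.smul_apply, smul_eq_mul]
      have h2 := hJw' i
      rw [h1]
      have h3 := mul_le_mul_of_nonneg_left h2 hcpos.le
      simpa using h3
    have hMu : ∀ i, (M *ᵥ u) i ≤ (b u xs) i := by
      intro i
      have h1 := hJu i
      have h2 : ((J x0) *ᵥ u) i = (N *ᵥ u) i - (b₁ u x0) i := by
        rw [hJmv]; simp [Pi.sub_apply]
      have h3 : (b₁ u x0) i ≤ (b₁ u xs) i := (QVEAux.bilin_mono hb₁ hu0 le_rfl hx0 hx0xs) i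
      have h4 : (b₁ u xs) i ≤ (b u xs) i := by
        have h5 : (0:ℝ) ≤ (b₂ u xs) i := (hb₂ u xs hu0 hxs_nonneg) i
        have h6 := congrFun (hbapp u xs) i
        simp only [Pi.add_apply] at h6
        linarith
      have h6 : (M *ᵥ u) i = (N *ᵥ u) i - (P *ᵥ u) i := by
        rw [hMsplit, Matrix.sub_mulVec]; simp [Pi.sub_apply]
      have h7 : 0 ≤ (P *ᵥ u) i := (QVEAux.mulVec_nonneg' hP hu0) i
      linarith
    set z : Fin n → ℝ := xs - (1/2 : ℝ) • u with hz_def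
    have hz0 : 0 ≤ z := by
      intro i
      have h1 := hule i
      have h2 := hu0 i
      simp only [Pi.zero_apply] at h2
      simp only [hz_def, Pi.sub_apply, Pi.smul_apply, smul_eq_mul, Pi.zero_apply]
      linarith
    have hbexp : b z z = b xs xs - (1/2:ℝ) • b xs u - (1/2:ℝ) • b u xs
        + ((1/2:ℝ) * (1/2:ℝ)) • b u u := by
      rw [hz_def]
      simp only [map_sub, _root_.map_smul, LinearMap.sub_apply, LinearMap.smul_apply,
        smul_sub, smul_smul]
      module
    have hsuper : a + b z z ≤ M *ᵥ z := by
      intro i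
      have hMzv : (M *ᵥ z) i = (M *ᵥ xs) i - (1/2:ℝ) * ((M *ᵥ u) i) := by
        rw [hz_def, Matrix.mulVec_sub, Matrix.mulVec_smul]
        simp [Pi.sub_apply, Pi.smul_apply, smul_eq_mul]
      have hsol := congrFun hxs_sol i
      simp only [Pi.add_apply] at hsol
      have hbz := congrFun hbexp i
      simp only [Pi.sub_apply, Pi.add_apply, Pi.smul_apply, smul_eq_mul] at hbz
      have h1 := hMu i
      have h2 : (b u u) i ≤ (b xs u) i := (QVEAux.bilin_mono hb hu0 hule hu0 le_rfl) i
      have h3 : (0:ℝ) ≤ (b xs u) i := (hb xs u hxs_nonneg hu0) i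
      show a i + (b z z) i ≤ (M *ᵥ z) i
      rw [hbz, hMzv, hsol]
      linarith
    have hge := hsuper_ge z hz0 hsuper
    have h1 := hge i₀
    have h2 : z i₀ = xs i₀ - (1/2:ℝ) * u i₀ := by
      simp [hz_def, Pi.sub_apply, Pi.smul_apply, smul_eq_mul]
    rw [h2] at h1
    linarith
  have hJinv_nn : ∀ x0 : Fin n → ℝ, 0 ≤ x0 → x0 ≤ xs → ∀ i j, 0 ≤ (J x0)⁻¹ i j := by
    intro x0 hx0 hx0xs
    exact QVEAux.zmat_homotopy_inv (J x0) (hJz x0 hx0) (hJunit_t x0 hx0 hx0xs)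
  have hJunit : ∀ x0 : Fin n → ℝ, 0 ≤ x0 → x0 ≤ xs → IsUnit (J x0).det := by
    intro x0 hx0 hx0xs
    have h := hJunit_t x0 hx0 hx0xs 0 le_rfl
    simpa using h
  -- one step of the iteration
  have hstep : ∀ k, (0 ≤ x k ∧ x k ≤ xs ∧ M *ᵥ x k ≤ a + b (x k) (x k)) →
      (x k ≤ x (k+1) ∧ x (k+1) ≤ xs ∧ M *ᵥ x (k+1) ≤ a + b (x (k+1)) (x (k+1))) := by
    rintro k ⟨hy0, hyxs, hyF⟩
    have hu := hJunit (x k) hy0 hyxs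
    have hnn := hJinv_nn (x k) hy0 hyxs
    have heq : (J (x k)) *ᵥ x (k+1) = g (x k) := by
      rw [hrec k, Matrix.mulVec_mulVec, Matrix.mul_nonsing_inv _ hu, Matrix.one_mulVec]
    have hrecov : ∀ cv : Fin n → ℝ, 0 ≤ cv → ∀ v, (J (x k)) *ᵥ v = cv → 0 ≤ v := by
      intro cv hc v hv
      have h1 : v = (J (x k))⁻¹ *ᵥ cv := by
        rw [← hv, Matrix.mulVec_mulVec, Matrix.nonsing_inv_mul _ hu, Matrix.one_mulVec]
      rw [h1]
      exact QVEAux.mulVec_nonneg' hnn hc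
    have hmono : x k ≤ x (k+1) := by
      have hc : (J (x k)) *ᵥ (x (k+1) - x k) = (a + b (x k) (x k)) - M *ᵥ (x k) := by
        rw [Matrix.mulVec_sub, heq, hg, hJmv, hbapp (x k) (x k), hMsplit, Matrix.sub_mulVec]
        abel
      have hcnn : 0 ≤ (a + b (x k) (x k)) - M *ᵥ (x k) := sub_nonneg.mpr hyF
      have h2 := hrecov _ hcnn _ hc
      intro i
      have h3 := h2 i
      simp only [Pi.sub_apply, Pi.zero_apply] at h3
      linarith
    have hle : x (k+1) ≤ xs := by
      have hNxs : N *ᵥ xs = (a + b xs xs) + P *ᵥ xs := by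
        rw [← hxs_sol, hMsplit, Matrix.sub_mulVec]; abel
      have hc : (J (x k)) *ᵥ (xs - x (k+1))
          = P *ᵥ (xs - x k) + b₁ xs (xs - x k) + (b₂ xs xs - b₂ (x k) (x k)) := by
        rw [Matrix.mulVec_sub, heq, hJmv, hg, hNxs, hbapp xs xs,
          Matrix.mulVec_sub P xs (x k), map_sub (b₁ xs) xs (x k)]
        abel
      have hcnn : 0 ≤ P *ᵥ (xs - x k) + b₁ xs (xs - x k) + (b₂ xs xs - b₂ (x k) (x k)) := by
        have h1 : 0 ≤ P *ᵥ (xs - x k) := QVEAux.mulVec_nonneg' hP (sub_nonneg.mpr hyxs)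
        have h2 : 0 ≤ b₁ xs (xs - x k) := hb₁ _ _ hxs_nonneg (sub_nonneg.mpr hyxs)
        have h3 : b₂ (x k) (x k) ≤ b₂ xs xs := QVEAux.bilin_mono hb₂ hy0 hyxs hy0 hyxs
        intro i
        have h1' := h1 i; have h2' := h2 i; have h3' := h3 i
        simp only [Pi.zero_apply] at h1' h2'
        simp only [Pi.add_apply, Pi.sub_apply, Pi.zero_apply]
        linarith
      have h2 := hrecov _ hcnn _ hc
      intro i
      have h3 := h2 i
      simp only [Pi.sub_apply, Pi.zero_apply] at h3
      linarith
    have hF : M *ᵥ x (k+1) ≤ a + b (x (k+1)) (x (k+1)) := by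
      have h1 : N *ᵥ (x (k+1)) - b₁ (x (k+1)) (x k) = a + P *ᵥ (x k) + b₂ (x k) (x k) := by
        rw [← hJmv, heq, hg]
      have h2 : N *ᵥ (x (k+1)) = a + P *ᵥ (x k) + b₂ (x k) (x k) + b₁ (x (k+1)) (x k) := by
        rw [← h1]; abel
      have hkey : (a + b (x (k+1)) (x (k+1))) - M *ᵥ (x (k+1))
          = P *ᵥ (x (k+1) - x k) + b₁ (x (k+1)) (x (k+1) - x k)
            + (b₂ (x (k+1)) (x (k+1)) - b₂ (x k) (x k)) := by
        rw [hbapp (x (k+1)) (x (k+1)), hMsplit, Matrix.sub_mulVec,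
          Matrix.mulVec_sub P (x (k+1)) (x k), map_sub (b₁ (x (k+1))) (x (k+1)) (x k), h2]
        abel
      have hx'0 : 0 ≤ x (k+1) := hy0.trans hmono
      have hrhs : 0 ≤ P *ᵥ (x (k+1) - x k) + b₁ (x (k+1)) (x (k+1) - x k)
            + (b₂ (x (k+1)) (x (k+1)) - b₂ (x k) (x k)) := by
        have h3 : 0 ≤ P *ᵥ (x (k+1) - x k) := QVEAux.mulVec_nonneg' hP (sub_nonneg.mpr hmono)
        have h4 : 0 ≤ b₁ (x (k+1)) (x (k+1) - x k) := hb₁ _ _ hx'0 (sub_nonneg.mpr hmono)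
        have h5 : b₂ (x k) (x k) ≤ b₂ (x (k+1)) (x (k+1)) :=
          QVEAux.bilin_mono hb₂ hy0 hmono hy0 hmono
        intro i
        have h3' := h3 i; have h4' := h4 i; have h5' := h5 i
        simp only [Pi.zero_apply] at h3' h4'
        simp only [Pi.add_apply, Pi.sub_apply, Pi.zero_apply]
        linarith
      intro i
      have h6 := hrhs i
      have h7 := congrFun hkey i
      simp only [Pi.add_apply, Pi.sub_apply, Pi.zero_apply] at h6 h7 ⊢
      linarith
    exact ⟨hmono, hle, hF⟩
  have hinvk : ∀ k, 0 ≤ x k ∧ x k ≤ xs ∧ M *ᵥ x k ≤ a + b (x k) (x k) := by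
    intro k
    induction k with
    | zero => exact ⟨hx0_nonneg, hx0_le, hx0_F⟩
    | succ k ih =>
        obtain ⟨h1, h2, h3⟩ := hstep k ih
        exact ⟨ih.1.trans h1, h2, h3⟩
  have heqk : ∀ k, (J (x k)) *ᵥ x (k+1) = g (x k) := by
    intro k
    have hu := hJunit (x k) (hinvk k).1 (hinvk k).2.1
    rw [hrec k, Matrix.mulVec_mulVec, Matrix.mul_nonsing_inv _ hu, Matrix.one_mulVec]
  -- convergence
  have hmono_seq : ∀ i, Monotone fun k => x k i :=
    fun i => monotone_nat_of_le_succ fun k => (hstep k (hinvk k)).1 i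
  have hbdd_seq : ∀ i, BddAbove (Set.range fun k => x k i) :=
    fun i => ⟨xs i, by rintro y ⟨k, rfl⟩; exact (hinvk k).2.1 i⟩
  set xb : Fin n → ℝ := fun i => ⨆ k, x k i with hxb_def
  have htend : ∀ i, Tendsto (fun k => x k i) atTop (𝓝 (xb i)) :=
    fun i => tendsto_atTop_ciSup (hmono_seq i) (hbdd_seq i)
  have htendsucc : ∀ i, Tendsto (fun k => x (k+1) i) atTop (𝓝 (xb i)) :=
    fun i => (htend i).comp (tendsto_add_atTop_nat 1)
  have hlim_eq : ∀ i, (N *ᵥ xb) i - b₁ xb xb i = a i + (P *ᵥ xb) i + b₂ xb xb i := by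
    intro i
    have hLHS : Tendsto (fun k => ((J (x k)) *ᵥ x (k+1)) i) atTop
        (𝓝 ((N *ᵥ xb) i - b₁ xb xb i)) := by
      have hform : ∀ k, ((J (x k)) *ᵥ x (k+1)) i
          = (N *ᵥ x (k+1)) i - b₁ (x (k+1)) (x k) i := by
        intro k; rw [hJmv]; simp [Pi.sub_apply]
      simp only [hform]
      exact (QVEAux.tendsto_mulVec N htendsucc i).sub
        (QVEAux.tendsto_bilin b₁ htendsucc htend i)
    have hRHS : Tendsto (fun k => ((J (x k)) *ᵥ x (k+1)) i) atTop
        (𝓝 (a i + (P *ᵥ xb) i + b₂ xb xb i)) := by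
      have hform : ∀ k, ((J (x k)) *ᵥ x (k+1)) i
          = a i + (P *ᵥ x k) i + b₂ (x k) (x k) i := by
        intro k
        rw [heqk k, hg]
        simp [Pi.add_apply]
      simp only [hform]
      exact (tendsto_const_nhds.add (QVEAux.tendsto_mulVec P htend i)).add
        (QVEAux.tendsto_bilin b₂ htend htend i)
    exact tendsto_nhds_unique hLHS hRHS
  have hsol : M *ᵥ xb = a + b xb xb := by
    funext i
    have h := hlim_eq i
    have hMv : (M *ᵥ xb) i = (N *ᵥ xb) i - (P *ᵥ xb) i := by
      rw [hMsplit, Matrix.sub_mulVec]; simp [Pi.sub_apply]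
    have hb' := congrFun (hbapp xb xb) i
    simp only [Pi.add_apply] at hb' ⊢
    linarith
  have hxb0 : 0 ≤ xb := by
    intro i
    have h0 := le_ciSup (hbdd_seq i) 0
    exact le_trans (hx0_nonneg i) h0
  have hxble : xb ≤ xs := fun i => ciSup_le fun k => (hinvk k).2.1 i
  have hxsxb : xs ≤ xb := hxs_min xb hxb0 hsol
  have hxb_eq : xb = xs := le_antisymm hxble hxsxb
  have htendsto : Tendsto x atTop (nhds xs) := by
    rw [tendsto_pi_nhds]
    intro i
    have h := htend i
    rw [hxb_eq] at h
    exact h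
  exact ⟨fun k => hJunit (x k) (hinvk k).1 (hinvk k).2.1,
    fun k => ⟨(hstep k (hinvk k)).1, (hstep k (hinvk k)).2.1⟩,
    htendsto,
    fun k => (hinvk k).2.2⟩
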